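/- (FloodSet agreement.) Let f be a natural number with r = f + 1, suppose the delivery pattern is consistent with the crash pattern, and suppose the set of faulty processes {q | crash q ≠ none} has cardinality at most f. Then all correct processes decide the same value: for all processes p and q with crash p = none and crash q = none, the minimum of W r p equals the minimum of W r q. -/
import Mathlib


open scoped Classical

/-- The FloodSet execution: `W 0 p = {init p}` and, for `t < r`,
`W (t+1) p = W t p ∪ ⋃ q, (if delivered t q p then W t q else ∅)`
(beyond round `r` the set is just carried along). -/
noncomputable def floodW {n r : ℕ} {V : Type} (init : Fin n → V)
    (delivered : Fin r → Fin n → Fin n → Prop) : ℕ → Fin n → Finset V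
  | 0, p => {init p}
  | t + 1, p =>
      if h : t < r then
        floodW init delivered t p ∪
          Finset.univ.biUnion fun q =>
            if delivered ⟨t, h⟩ q p then floodW init delivered t q else ∅
      else floodW init delivered t p

/-- Process `p` is alive at the end of round `t`. -/
def aliveAtEnd {n r : ℕ} (crash : Fin n → Option (Fin r)) (t : ℕ) (p : Fin n) : Prop :=
  crash p = none ∨ ∃ s : Fin r, crash p = some s ∧ t < s.val

/-- The delivery pattern is consistent with the crash pattern. -/
def consistentDel {n r : ℕ} (crash : Fin n → Option (Fin r))
    (delivered : Fin r → Fin n → Fin n → Prop) : Prop :=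
  (∀ (t : Fin r) (q p : Fin n),
      (crash q = none ∨ ∃ s : Fin r, crash q = some s ∧ t.val < s.val) → delivered t q p) ∧
  (∀ (t : Fin r) (q p : Fin n) (s : Fin r), crash q = some s → s.val < t.val →
      ¬ delivered t q p)

/-- FloodSet agreement. -/
theorem stmt_9 (n f r : ℕ) (hr : r = f + 1)
    (V : Type) [Fintype V] [Nonempty V] [LinearOrder V]
    (init : Fin n → V) (crash : Fin n → Option (Fin r))
    (delivered : Fin r → Fin n → Fin n → Prop)
    (hcons : consistentDel crash delivered)
    (hf : (Finset.univ.filter fun q => crash q ≠ none).card ≤ f) :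
    ∀ p q : Fin n, crash p = none → crash q = none →
      (floodW init delivered r p).min = (floodW init delivered r q).min := by
  obtain ⟨hdel, hnodel⟩ := hcons
  have hr0 : 0 < r := by omega
  -- existence of a clean round
  obtain ⟨T, hT⟩ : ∃ T : Fin r, ∀ q s, crash q = some s → s ≠ T := by
    by_contra h
    push_neg at h
    have hsub : (Finset.univ : Finset (Fin r)) ⊆
        (Finset.univ.filter fun q => crash q ≠ none).image
          (fun q => (crash q).getD ⟨0, hr0⟩) := by
      intro T _
      obtain ⟨q, s, hq, hs⟩ := h T
      refine Finset.mem_image.2 ⟨q, ?_, ?_⟩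
      · simp [hq]
      · simp [hq, hs]
    have h1 := Finset.card_le_card hsub
    have h2 := Finset.card_image_le (s := Finset.univ.filter fun q => crash q ≠ none)
      (f := fun q => (crash q).getD ⟨0, hr0⟩)
    simp only [Finset.card_univ, Fintype.card_fin] at h1
    omega
  set t := T.val with htdef
  have ht : t < r := T.isLt
  set U : Finset V := Finset.univ.biUnion
    (fun q => if aliveAtEnd crash t q then floodW init delivered t q else ∅) with hU
  have alive_mono : ∀ a b (p : Fin n), a ≤ b → aliveAtEnd crash b p → aliveAtEnd crash a p := by
    intro a b p hab h
    rcases h with h | ⟨s, hs, hlt⟩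
    · exact Or.inl h
    · exact Or.inr ⟨s, hs, by omega⟩
  -- Lemma A: after the clean round, alive processes all hold U
  have stepA : ∀ p, aliveAtEnd crash t p → floodW init delivered (t + 1) p = U := by
    intro p hp
    have hunf : floodW init delivered (t + 1) p =
        floodW init delivered t p ∪
          Finset.univ.biUnion fun q =>
            if delivered ⟨t, ht⟩ q p then floodW init delivered t q else ∅ := by
      simp only [floodW]; rw [dif_pos ht]; congr!
    rw [hunf]
    apply Finset.Subset.antisymm
    · apply Finset.union_subset
      · intro x hx
        refine Finset.mem_biUnion.2 ⟨p, Finset.mem_univ p, ?_⟩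
        rw [if_pos hp]; exact hx
      · intro x hx
        obtain ⟨q, -, hq⟩ := Finset.mem_biUnion.1 hx
        by_cases hd : delivered ⟨t, ht⟩ q p
        · rw [if_pos hd] at hq
          have halive : aliveAtEnd crash t q := by
            rcases hcq : crash q with _ | s
            · exact Or.inl hcq
            · have hns : ¬ s.val < t := fun hlt => hnodel ⟨t, ht⟩ q p s hcq hlt hd
              have hne : s ≠ T := hT q s hcq
              have : t < s.val := by
                rcases Nat.lt_or_ge t s.val with h' | h'
                · exact h'
                · exact absurd (Fin.ext (by omega)) hne
              exact Or.inr ⟨s, hcq, this⟩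
          refine Finset.mem_biUnion.2 ⟨q, Finset.mem_univ q, ?_⟩
          rw [if_pos halive]; exact hq
        · rw [if_neg hd] at hq; exact absurd hq (Finset.notMem_empty x)
    · intro x hx
      obtain ⟨q, -, hq⟩ := Finset.mem_biUnion.1 hx
      by_cases ha : aliveAtEnd crash t q
      · rw [if_pos ha] at hq
        have hd : delivered ⟨t, ht⟩ q p := hdel ⟨t, ht⟩ q p ha
        apply Finset.mem_union_right
        refine Finset.mem_biUnion.2 ⟨q, Finset.mem_univ q, ?_⟩
        rw [if_pos hd]; exact hq
      · rw [if_neg ha] at hq; exact absurd hq (Finset.notMem_empty x)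
  -- Lemma B: by induction, all alive processes keep holding U
  have key : ∀ d (p : Fin n), t + 1 + d ≤ r → aliveAtEnd crash (t + d) p →
      floodW init delivered (t + 1 + d) p = U := by
    intro d
    induction d with
    | zero =>
      intro p _ hp
      simpa using stepA p (by simpa using hp)
    | succ d ih =>
      intro p hle hp
      have h1 : t + 1 + d < r := by omega
      have heq : t + 1 + (d + 1) = (t + 1 + d) + 1 := by ring
      rw [heq]
      have hunf : floodW init delivered ((t + 1 + d) + 1) p =
          floodW init delivered (t + 1 + d) p ∪
            Finset.univ.biUnion fun q =>
              if delivered ⟨t + 1 + d, h1⟩ q p then floodW init delivered (t + 1 + d) q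
              else ∅ := by
        simp only [floodW]; rw [dif_pos h1]; congr!
      rw [hunf]
      have hpU : floodW init delivered (t + 1 + d) p = U :=
        ih p (by omega) (alive_mono _ _ p (by omega) hp)
      apply Finset.Subset.antisymm
      · apply Finset.union_subset
        · rw [hpU]
        · intro x hx
          obtain ⟨q, -, hq⟩ := Finset.mem_biUnion.1 hx
          by_cases hd : delivered ⟨t + 1 + d, h1⟩ q p
          · rw [if_pos hd] at hq
            have halive : aliveAtEnd crash (t + d) q := by
              rcases hcq : crash q with _ | s
              · exact Or.inl hcq
              · have hns : ¬ s.val < t + 1 + d := fun hlt =>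
                  hnodel ⟨t + 1 + d, h1⟩ q p s hcq hlt hd
                exact Or.inr ⟨s, hcq, by omega⟩
            rw [ih q (by omega) halive] at hq
            exact hq
          · rw [if_neg hd] at hq; exact absurd hq (Finset.notMem_empty x)
      · rw [← hpU]
        exact Finset.subset_union_left
  intro p q hp hq
  have hrw : r = t + 1 + (r - 1 - t) := by omega
  have hWp : floodW init delivered r p = U := by
    have := key (r - 1 - t) p (by omega) (Or.inl hp)
    rwa [show t + 1 + (r - 1 - t) = r from by omega] at this
  have hWq : floodW init delivered r q = U := by
    have := key (r - 1 - t) q (by omega) (Or.inl hq)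
    rwa [show t + 1 + (r - 1 - t) = r from by omega] at this
  rw [hWp, hWq]
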